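/- Let C be a category admitting finite coproducts, reflexive coequalizers, and filtered colimits. Then C admits all small colimits. Moreover, a functor F : C → D between two such categories that preserves finite coproducts, reflexive coequalizers, and filtered colimits preserves all small colimits. -/

import Mathlib

open CategoryTheory CategoryTheory.Limits

universe v u u'

namespace Stmt1Aux

open CategoryTheory.Limits.CoproductsFromFiniteFiltered

section Cofork

variable {E : Type*} [Category E]

/-- Transfer a colimit cofork from a "reflexive replacement" pair to the original pair. -/
noncomputable def isColimitOfPrimed {X Y P Z : E} {f g : X ⟶ Y}
    (i₁ : X ⟶ P) (i₂ : Y ⟶ P) {f' g' : P ⟶ Y}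
    (h₁f : i₁ ≫ f' = f) (h₂f : i₂ ≫ f' = 𝟙 Y) (h₁g : i₁ ≫ g' = g) (h₂g : i₂ ≫ g' = 𝟙 Y)
    (hepi : ∀ {W : E} (a b : P ⟶ W), i₁ ≫ a = i₁ ≫ b → i₂ ≫ a = i₂ ≫ b → a = b)
    {π : Y ⟶ Z} (w' : f' ≫ π = g' ≫ π) (w : f ≫ π = g ≫ π)
    (hc : IsColimit (Cofork.ofπ π w')) : IsColimit (Cofork.ofπ π w) :=
  Cofork.IsColimit.mk _
    (fun s => Cofork.IsColimit.desc hc s.π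
      (hepi _ _
        (by rw [← Category.assoc, ← Category.assoc, h₁f, h₁g]; exact s.condition)
        (by rw [← Category.assoc, ← Category.assoc, h₂f, h₂g])))
    (fun s => by simpa using Cofork.IsColimit.π_desc' hc s.π _)
    (fun s m hm => Cofork.IsColimit.hom_ext hc
      (by simpa using hm.trans (Cofork.IsColimit.π_desc' hc s.π _).symm))

/-- Transfer a colimit cofork from the original pair to a "reflexive replacement" pair. -/
noncomputable def isColimitPrimedOfIsColimit {X Y P Z : E} {f g : X ⟶ Y}
    (i₁ : X ⟶ P) (_i₂ : Y ⟶ P) {f' g' : P ⟶ Y}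
    (h₁f : i₁ ≫ f' = f) (h₁g : i₁ ≫ g' = g)
    {π : Y ⟶ Z} (w' : f' ≫ π = g' ≫ π) (w : f ≫ π = g ≫ π)
    (hc : IsColimit (Cofork.ofπ π w)) : IsColimit (Cofork.ofπ π w') :=
  Cofork.IsColimit.mk _
    (fun s => Cofork.IsColimit.desc hc s.π
      (by rw [← h₁f, ← h₁g, Category.assoc, Category.assoc]; rw [s.condition]))
    (fun s => by simpa using Cofork.IsColimit.π_desc' hc s.π _)
    (fun s m hm => Cofork.IsColimit.hom_ext hc
      (by simpa using hm.trans (Cofork.IsColimit.π_desc' hc s.π _).symm))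

theorem hasCoequalizers_of_reflexive [HasBinaryCoproducts E] [HasReflexiveCoequalizers E] :
    HasCoequalizers E := by
  suffices h : ∀ {X Y : E} (f g : X ⟶ Y), HasColimit (parallelPair f g) by
    constructor
    intro K
    exact hasColimit_of_iso (diagramIsoParallelPair K)
  intro X Y f g
  let f' : (X ⨿ Y) ⟶ Y := coprod.desc f (𝟙 Y)
  let g' : (X ⨿ Y) ⟶ Y := coprod.desc g (𝟙 Y)
  haveI : IsReflexivePair f' g' :=
    IsReflexivePair.mk' coprod.inr (by simp only [f', coprod.inr_desc]) (by simp only [g', coprod.inr_desc])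
  have w' : f' ≫ coequalizer.π f' g' = g' ≫ coequalizer.π f' g' := coequalizer.condition f' g'
  have w : f ≫ coequalizer.π f' g' = g ≫ coequalizer.π f' g' := by
    have h1 := coprod.inl ≫= w'
    simpa only [f', g', coprod.inl_desc_assoc] using h1
  exact ⟨⟨⟨_, isColimitOfPrimed coprod.inl coprod.inr (coprod.inl_desc _ _) (coprod.inr_desc _ _)
    (coprod.inl_desc _ _) (coprod.inr_desc _ _)
    (fun a b h1 h2 => coprod.hom_ext h1 h2) w' w (coequalizerIsCoequalizer f' g')⟩⟩⟩

end Cofork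

section Coproducts

variable {C : Type u} [Category.{v} C] {D : Type u'} [Category.{v} D] (F : C ⥤ D)
  [HasFiniteCoproducts C] [HasFiniteCoproducts D] [PreservesFiniteCoproducts F]

/-- If `F` preserves finite coproducts, `liftToFinsetObj` commutes with `F`. -/
noncomputable def liftIso {α : Type v} (K : Discrete α ⥤ C) :
    liftToFinsetObj (K ⋙ F) ≅ liftToFinsetObj K ⋙ F :=
  NatIso.ofComponents
    (fun s => let e := asIso (sigmaComparison F (fun x : s => K.obj x)); e)
    (fun {s t} h => by
      dsimp [liftToFinsetObj]
      ext x
      simp [← F.map_comp])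

lemma preservesCoproductShape {α : Type v}
    [HasColimitsOfShape (Finset (Discrete α)) C]
    [HasColimitsOfShape (Finset (Discrete α)) D]
    [PreservesColimitsOfShape (Finset (Discrete α)) F]
    (f : α → C) : PreservesColimit (Discrete.functor f) F := by
  classical
  set K := Discrete.functor f with hK
  apply preservesColimit_of_preserves_colimit_cocone (liftToFinsetColimitCocone K).isColimit
  let e1 : colimit (liftToFinsetObj (K ⋙ F)) ≅ colimit (liftToFinsetObj K ⋙ F) :=
    HasColimit.isoOfNatIso (liftIso F K)
  let e2 : colimit (liftToFinsetObj K ⋙ F) ≅ F.obj (colimit (liftToFinsetObj K)) :=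
    (preservesColimitIso F _).symm
  refine IsColimit.ofIsoColimit (liftToFinsetColimitCocone (K ⋙ F)).isColimit
    (Cocones.ext (e1 ≪≫ e2) ?_)
  intro j
  simp only [liftToFinsetColimitCocone, Discrete.natTrans_app, Functor.mapCocone_ι_app,
    Iso.trans_hom, Category.assoc, e1, e2, Iso.symm_hom]
  refine (Category.assoc _ _ _).trans ?_
  erw [HasColimit.isoOfNatIso_ι_hom_assoc]
  rw [ι_preservesColimitIso_inv F]
  show _ ≫ sigmaComparison F _ ≫ _ = _
  exact (ι_comp_sigmaComparison_assoc F (fun b : ({j} : Finset (Discrete α)) => K.obj ↑b)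
    ⟨j, by simp⟩ (F.map (colimit.ι (liftToFinsetObj K) {j}))).trans (F.map_comp _ _).symm

end Coproducts

end Stmt1Aux

open Stmt1Aux

theorem stmt_1 {C : Type u} [Category.{v} C] {D : Type u'} [Category.{v} D]
    [HasFiniteCoproducts C] [HasReflexiveCoequalizers C]
    [HasFiniteCoproducts D] [HasReflexiveCoequalizers D]
    (hfilC : ∀ (J : Type v) [SmallCategory J] [IsFiltered J], HasColimitsOfShape J C)
    (hfilD : ∀ (J : Type v) [SmallCategory J] [IsFiltered J], HasColimitsOfShape J D)
    (F : C ⥤ D)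
    (h1 : PreservesFiniteCoproducts F)
    (h2 : ∀ {X Y : C} (f g : X ⟶ Y), IsReflexivePair f g →
      Nonempty (PreservesColimit (parallelPair f g) F))
    (h3 : ∀ (J : Type v) [SmallCategory J] [IsFiltered J],
      Nonempty (PreservesColimitsOfShape J F)) :
    HasColimits C ∧ Nonempty (PreservesColimits F) := by
  haveI := h1
  haveI : HasFilteredColimitsOfSize.{v, v} C := ⟨fun J _ _ => hfilC J⟩
  haveI : HasFilteredColimitsOfSize.{v, v} D := ⟨fun J _ _ => hfilD J⟩
  haveI : HasCoequalizers C := hasCoequalizers_of_reflexive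
  haveI : HasCoequalizers D := hasCoequalizers_of_reflexive
  haveI : HasCoproducts.{v} C := hasCoproducts_of_finite_and_filtered
  haveI : HasCoproducts.{v} D := hasCoproducts_of_finite_and_filtered
  haveI hColC : HasColimits C := has_colimits_of_hasCoequalizers_and_coproducts
  refine ⟨hColC, ⟨?_⟩⟩
  -- F preserves coequalizers
  have hpp : ∀ {X Y : C} (f g : X ⟶ Y), PreservesColimit (parallelPair f g) F := by
    intro X Y f g
    let f' : (X ⨿ Y) ⟶ Y := coprod.desc f (𝟙 Y)
    let g' : (X ⨿ Y) ⟶ Y := coprod.desc g (𝟙 Y)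
    haveI : IsReflexivePair f' g' :=
      IsReflexivePair.mk' coprod.inr (by simp only [f', coprod.inr_desc]) (by simp only [g', coprod.inr_desc])
    haveI : PreservesColimit (parallelPair f' g') F := (h2 f' g' inferInstance).some
    have w' : f' ≫ coequalizer.π f' g' = g' ≫ coequalizer.π f' g' := coequalizer.condition f' g'
    have w : f ≫ coequalizer.π f' g' = g ≫ coequalizer.π f' g' := by
      have hh := coprod.inl ≫= w'
      simpa only [f', g', coprod.inl_desc_assoc] using hh
    have hC : IsColimit (Cofork.ofπ (coequalizer.π f' g') w) :=
      isColimitOfPrimed coprod.inl coprod.inr (coprod.inl_desc _ _) (coprod.inr_desc _ _)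
        (coprod.inl_desc _ _) (coprod.inr_desc _ _)
        (fun a b hh1 hh2 => coprod.hom_ext hh1 hh2) w' w (coequalizerIsCoequalizer f' g')
    apply preservesColimit_of_preserves_colimit_cocone hC
    refine (isColimitMapCoconeCoforkEquiv F w).symm ?_
    -- colimit cofork, in D, of `F.map f'`, `F.map g'`
    have hD' : IsColimit (Cofork.ofπ (F.map (coequalizer.π f' g'))
        (show F.map f' ≫ _ = F.map g' ≫ _ by rw [← F.map_comp, ← F.map_comp, w'])) :=
      isColimitCoforkMapOfIsColimit F w' (coequalizerIsCoequalizer f' g')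
    haveI : IsIso (coprodComparison F X Y) := inferInstance
    exact isColimitOfPrimed (F.map coprod.inl) (F.map coprod.inr)
      (by rw [← F.map_comp, coprod.inl_desc]) (by rw [← F.map_comp, coprod.inr_desc, F.map_id])
      (by rw [← F.map_comp, coprod.inl_desc]) (by rw [← F.map_comp, coprod.inr_desc, F.map_id])
      (fun a b hh1 hh2 => by
        have : coprodComparison F X Y ≫ a = coprodComparison F X Y ≫ b := by
          apply coprod.hom_ext
          · rwa [coprodComparison_inl_assoc, coprodComparison_inl_assoc]
          · rwa [coprodComparison_inr_assoc, coprodComparison_inr_assoc]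
        exact (cancel_epi (coprodComparison F X Y)).1 this)
      _ _ hD'
  haveI : PreservesColimitsOfShape WalkingParallelPair F := by
    constructor
    intro K
    haveI := hpp (K.map WalkingParallelPairHom.left) (K.map WalkingParallelPairHom.right)
    exact preservesColimit_of_iso_diagram F (diagramIsoParallelPair K).symm
  haveI : ∀ (J : Type v), PreservesColimitsOfShape (Discrete J) F := by
    intro J
    haveI := (h3 (Finset (Discrete J))).some
    haveI : ∀ (f : J → C), PreservesColimit (Discrete.functor f) F := fun f =>
      preservesCoproductShape F f
    exact preservesColimitsOfShape_of_discrete F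
  exact preservesColimits_of_preservesCoequalizers_and_coproducts F
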